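/- arXiv:1402.4148 — 3 statements merged into one kernel-verified Lean document; each statement's English description precedes it below -/
import Mathlib

section
/- Let A be an infinite matrix over a countable set G with finite S_{0,1}-measure and bounded entries, and let w be a weight with w(i,j) ≥ 1 and sup_{i,j} |a_{ij}| w(i,j) < ∞. Then lim_{q→0⁺} ‖A‖_{S_{q,w}}^q = ‖A‖_{S_{0,1}}, where ‖A‖_{S_{q,w}} = max( sup_i (Σ_j |a_{ij}|^q w(i,j)^q)^{1/q}, sup_j (Σ_i |a_{ij}|^q w(i,j)^q)^{1/q} ). -/
open Filter

/-- The sparsity measure ‖A‖_{S_{0,1}} (valued in ℕ∞). -/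
noncomputable def S01 {G : Type*} (A : G → G → ℂ) : ℕ∞ :=
  max (⨆ i : G, {j : G | A i j ≠ 0}.encard) (⨆ j : G, {i : G | A i j ≠ 0}.encard)

/-- The q-th power of the Gröchenig–Schur S_{q,w} quasi-norm. -/
noncomputable def SqwPow {G : Type*} (q : ℝ) (w : G → G → ℝ) (A : G → G → ℂ) : ℝ :=
  max (⨆ i : G, ∑' j : G, ‖A i j‖ ^ q * w i j ^ q)
      (⨆ j : G, ∑' i : G, ‖A i j‖ ^ q * w i j ^ q)

private lemma tsum_row_eq {G : Type*} (B : G → G → ℂ) (w : G → G → ℝ)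
    (hw : ∀ i j, 1 ≤ w i j) {q : ℝ} (hq : 0 < q) (i : G)
    (h : {j : G | B i j ≠ 0}.Finite) :
    ∑' j : G, ‖B i j‖ ^ q * w i j ^ q
      = ∑ j ∈ h.toFinset, (‖B i j‖ * w i j) ^ q := by
  rw [tsum_eq_sum (s := h.toFinset) ?_]
  · exact Finset.sum_congr rfl fun j _ =>
      (Real.mul_rpow (norm_nonneg _) (le_trans zero_le_one (hw i j))).symm
  · intro j hj
    have hj0 : B i j = 0 := by simpa using hj
    simp [hj0, Real.zero_rpow hq.ne']

private lemma row_upper {G : Type*} (B : G → G → ℂ) (w : G → G → ℝ)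
    (hw : ∀ i j, 1 ≤ w i j) (M : ℝ) (hM : ∀ i j, ‖B i j‖ * w i j ≤ M)
    (N : ℕ) (hcard : ∀ i, {j : G | B i j ≠ 0}.encard ≤ (N : ℕ∞))
    {q : ℝ} (hq : 0 < q) (i : G) :
    ∑' j : G, ‖B i j‖ ^ q * w i j ^ q ≤ (N : ℝ) * (max M 1) ^ q := by
  have hfi : {j : G | B i j ≠ 0}.Finite := by
    rw [← Set.encard_ne_top_iff]
    exact ne_top_of_le_ne_top (by simp) (hcard i)
  have hcardle : (hfi.toFinset.card : ℕ) ≤ N := by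
    have := hcard i
    rw [hfi.encard_eq_coe_toFinset_card] at this
    exact_mod_cast this
  rw [tsum_row_eq B w hw hq i hfi]
  have hCpos : (0 : ℝ) ≤ (max M 1) ^ q := Real.rpow_nonneg (by positivity) q
  calc ∑ j ∈ hfi.toFinset, (‖B i j‖ * w i j) ^ q
      ≤ hfi.toFinset.card • (max M 1) ^ q := by
        refine Finset.sum_le_card_nsmul _ _ _ fun j _ => ?_
        exact Real.rpow_le_rpow
          (mul_nonneg (norm_nonneg _) (le_trans zero_le_one (hw i j)))
          (le_trans (hM i j) (le_max_left _ _)) hq.le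
    _ = (hfi.toFinset.card : ℝ) * (max M 1) ^ q := by rw [nsmul_eq_mul]
    _ ≤ (N : ℝ) * (max M 1) ^ q := by
        apply mul_le_mul_of_nonneg_right _ hCpos
        exact_mod_cast hcardle

private lemma row_lower {G : Type*} (B : G → G → ℂ) (w : G → G → ℝ)
    (hw : ∀ i j, 1 ≤ w i j) (i : G) (h : {j : G | B i j ≠ 0}.Finite)
    (hne : {j : G | B i j ≠ 0}.Nonempty) :
    ∃ δ : ℝ, 0 < δ ∧ δ ≤ 1 ∧ ∀ q : ℝ, 0 < q →
      (h.toFinset.card : ℝ) * δ ^ q ≤ ∑' j : G, ‖B i j‖ ^ q * w i j ^ q := by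
  have hFne : h.toFinset.Nonempty := by
    rwa [Set.Finite.toFinset_nonempty]
  set δ : ℝ := h.toFinset.inf' hFne (fun j => min (‖B i j‖ * w i j) 1) with hδdef
  have hδpos : 0 < δ := by
    rw [hδdef, Finset.lt_inf'_iff]
    intro j hj
    have hjne : B i j ≠ 0 := by simpa using (h.mem_toFinset.mp hj)
    exact lt_min (mul_pos (norm_pos_iff.mpr hjne)
      (lt_of_lt_of_le one_pos (hw i j))) one_pos
  have hδle1 : δ ≤ 1 := by
    obtain ⟨j0, hj0⟩ := hFne
    exact le_trans (Finset.inf'_le _ hj0) (min_le_right _ _)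
  refine ⟨δ, hδpos, hδle1, fun q hq => ?_⟩
  rw [tsum_row_eq B w hw hq i h]
  calc (h.toFinset.card : ℝ) * δ ^ q = h.toFinset.card • δ ^ q := by rw [nsmul_eq_mul]
    _ ≤ ∑ j ∈ h.toFinset, (‖B i j‖ * w i j) ^ q := by
        refine Finset.card_nsmul_le_sum _ _ _ fun j hj => ?_
        exact Real.rpow_le_rpow hδpos.le
          (le_trans (Finset.inf'_le _ hj) (min_le_left _ _)) hq.le

/-- For a matrix with finite S_{0,1}-measure and bounded weighted entries,
‖A‖_{S_{q,w}}^q → ‖A‖_{S_{0,1}} as q → 0⁺. -/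
theorem SqwPow_tendsto_S01 {G : Type*} [Countable G] (A : G → G → ℂ) (w : G → G → ℝ)
    (hw : ∀ i j, 1 ≤ w i j) (hfin : S01 A ≠ ⊤)
    (hbdd : ∃ M : ℝ, ∀ i j, ‖A i j‖ * w i j ≤ M) :
    Tendsto (fun q : ℝ => SqwPow q w A) (nhdsWithin 0 (Set.Ioi 0))
      (nhds ((S01 A).toNat : ℝ)) := by
  classical
  obtain ⟨M, hM⟩ := hbdd
  set N : ℕ := (S01 A).toNat with hNdef
  have hS : (N : ℕ∞) = S01 A := ENat.coe_toNat hfin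
  set C : ℝ := max M 1 with hCdef
  have hC1 : (1 : ℝ) ≤ C := le_max_right _ _
  -- cardinality bounds
  have hrow : ∀ i : G, {j : G | A i j ≠ 0}.encard ≤ (N : ℕ∞) := fun i => by
    rw [hS]
    exact le_trans (le_iSup (fun i => {j : G | A i j ≠ 0}.encard) i) (le_max_left _ _)
  have hcol : ∀ j : G, {i : G | A i j ≠ 0}.encard ≤ (N : ℕ∞) := fun j => by
    rw [hS]
    exact le_trans (le_iSup (fun j => {i : G | A i j ≠ 0}.encard) j) (le_max_right _ _)
  -- the transposed matrix
  set B : G → G → ℂ := fun i j => A j i with hBdef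
  set w' : G → G → ℝ := fun i j => w j i with hw'def
  have hwB : ∀ i j, 1 ≤ w' i j := fun i j => hw j i
  have hMB : ∀ i j, ‖B i j‖ * w' i j ≤ M := fun i j => hM j i
  -- upper bound
  have hup : ∀ q : ℝ, 0 < q → SqwPow q w A ≤ (N : ℝ) * C ^ q := by
    intro q hq
    have hCq : (0 : ℝ) ≤ (N : ℝ) * C ^ q :=
      mul_nonneg (Nat.cast_nonneg _) (Real.rpow_nonneg (by positivity) q)
    refine max_le (Real.iSup_le (fun i => ?_) hCq) (Real.iSup_le (fun j => ?_) hCq)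
    · exact row_upper A w hw M hM N hrow hq i
    · exact row_upper B w' hwB M hMB N hcol hq j
  -- lower bound
  have hSqw_nonneg : ∀ q : ℝ, 0 ≤ SqwPow q w A := by
    intro q
    refine le_trans (Real.iSup_nonneg fun i => tsum_nonneg fun j => ?_) (le_max_left _ _)
    exact mul_nonneg (Real.rpow_nonneg (norm_nonneg _) q)
      (Real.rpow_nonneg (le_trans zero_le_one (hw i j)) q)
  have hlow : ∃ δ : ℝ, 0 < δ ∧ δ ≤ 1 ∧ ∀ q : ℝ, 0 < q →
      (N : ℝ) * δ ^ q ≤ SqwPow q w A := by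
    by_cases hN0 : N = 0
    · exact ⟨1, one_pos, le_refl _, fun q hq => by
        simpa [hN0] using hSqw_nonneg q⟩
    · have hN1 : 1 ≤ N := Nat.one_le_iff_ne_zero.mpr hN0
      have hle : (N : ℕ∞) ≤ max (⨆ i : G, {j : G | A i j ≠ 0}.encard)
          (⨆ j : G, {i : G | A i j ≠ 0}.encard) := le_of_eq (hS.trans rfl)
      rw [le_max_iff] at hle
      -- In either case, find a row/column realizing the max cardinality
      have key : ∀ (D : G → G → ℂ) (v : G → G → ℝ), (∀ i j, 1 ≤ v i j) →
          (∀ i, {j : G | D i j ≠ 0}.encard ≤ (N : ℕ∞)) →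
          ((N : ℕ∞) ≤ ⨆ i : G, {j : G | D i j ≠ 0}.encard) →
          (∀ i j, ‖D i j‖ * v i j ≤ M) →
          ∃ δ : ℝ, 0 < δ ∧ δ ≤ 1 ∧ ∀ q : ℝ, 0 < q →
            (N : ℝ) * δ ^ q ≤ ⨆ i : G, ∑' j : G, ‖D i j‖ ^ q * v i j ^ q := by
        intro D v hv hDcard hDsup hDM
        have hlt : ((N - 1 : ℕ) : ℕ∞) < ⨆ i : G, {j : G | D i j ≠ 0}.encard :=
          lt_of_lt_of_le (by exact_mod_cast Nat.sub_lt hN1 one_pos) hDsup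
        obtain ⟨i, hi⟩ := lt_iSup_iff.mp hlt
        have hieq : {j : G | D i j ≠ 0}.encard = (N : ℕ∞) := by
          refine le_antisymm (hDcard i) ?_
          have := Order.add_one_le_of_lt hi
          have hcast : ((N - 1 : ℕ) : ℕ∞) + 1 = (N : ℕ∞) := by
            exact_mod_cast congrArg (Nat.cast : ℕ → ℕ∞) (Nat.succ_pred_eq_of_pos hN1)
          rwa [hcast] at this
        have hifin : {j : G | D i j ≠ 0}.Finite := by
          rw [← Set.encard_ne_top_iff, hieq]; simp
        have hine : {j : G | D i j ≠ 0}.Nonempty := by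
          rw [← Set.encard_ne_zero, hieq]
          exact_mod_cast hN0
        have hcardN : hifin.toFinset.card = N := by
          have := hieq
          rw [hifin.encard_eq_coe_toFinset_card] at this
          exact_mod_cast this
        obtain ⟨δ, hδpos, hδle, hδ⟩ := row_lower D v hv i hifin hine
        refine ⟨δ, hδpos, hδle, fun q hq => ?_⟩
        have hbddA : BddAbove (Set.range fun i => ∑' j : G, ‖D i j‖ ^ q * v i j ^ q) := by
          refine ⟨(N : ℝ) * C ^ q, ?_⟩
          rintro x ⟨i', rfl⟩
          exact row_upper D v hv M hDM N hDcard hq i'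
        calc (N : ℝ) * δ ^ q = (hifin.toFinset.card : ℝ) * δ ^ q := by rw [hcardN]
          _ ≤ ∑' j : G, ‖D i j‖ ^ q * v i j ^ q := hδ q hq
          _ ≤ ⨆ i : G, ∑' j : G, ‖D i j‖ ^ q * v i j ^ q := le_ciSup hbddA i
      rcases hle with hle | hle
      · obtain ⟨δ, h1, h2, h3⟩ := key A w hw hrow hle hM
        exact ⟨δ, h1, h2, fun q hq => le_trans (h3 q hq) (le_max_left _ _)⟩
      · obtain ⟨δ, h1, h2, h3⟩ := key B w' hwB hcol hle hMB
        exact ⟨δ, h1, h2, fun q hq => le_trans (h3 q hq) (le_max_right _ _)⟩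
  obtain ⟨δ, hδpos, hδle, hlow⟩ := hlow
  -- squeeze
  have hCpos : (0 : ℝ) < C := lt_of_lt_of_le one_pos hC1
  have htδ : Tendsto (fun q : ℝ => (N : ℝ) * δ ^ q) (nhdsWithin 0 (Set.Ioi 0))
      (nhds (N : ℝ)) := by
    have h1 : Tendsto (fun q : ℝ => δ ^ q) (nhds 0) (nhds 1) := by
      have := (Real.continuousAt_const_rpow (a := δ) (b := 0) hδpos.ne').tendsto
      simpa [Real.rpow_zero] using this
    have := tendsto_const_nhds (α := ℝ) (x := (N : ℝ)) |>.mul h1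
    simpa using this.mono_left nhdsWithin_le_nhds
  have htC : Tendsto (fun q : ℝ => (N : ℝ) * C ^ q) (nhdsWithin 0 (Set.Ioi 0))
      (nhds (N : ℝ)) := by
    have h1 : Tendsto (fun q : ℝ => C ^ q) (nhds 0) (nhds 1) := by
      have := (Real.continuousAt_const_rpow (a := C) (b := 0) hCpos.ne').tendsto
      simpa [Real.rpow_zero] using this
    have := tendsto_const_nhds (α := ℝ) (x := (N : ℝ)) |>.mul h1
    simpa using this.mono_left nhdsWithin_le_nhds
  refine tendsto_of_tendsto_of_tendsto_of_le_of_le' htδ htC ?_ ?_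
  · filter_upwards [self_mem_nhdsWithin] with q hq
    exact hlow q hq
  · filter_upwards [self_mem_nhdsWithin] with q hq
    exact hup q hq
end

section
/- For 0 < q ≤ 1 and a submultiplicative weight w ≥ 1 on G × G, the Schur-class quasi-norm is submultiplicative: ‖AB‖_{S_{q,w}} ≤ ‖A‖_{S_{q,w}} · ‖B‖_{S_{q,w}} for all matrices A, B with finite S_{q,w}-measure. -/
/-- The Gröchenig–Schur S_{q,w} quasi-norm. -/
noncomputable def SqwNorm {G : Type*} (q : ℝ) (w : G → G → ℝ) (A : G → G → ℂ) : ℝ :=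
  SqwPow q w A ^ (1 / q)

/-- The matrix A has finite S_{q,w}-measure (summable rows/columns with
uniformly bounded weighted sums). -/
def FiniteSqw {G : Type*} (q : ℝ) (w : G → G → ℝ) (A : G → G → ℂ) : Prop :=
  (∀ i : G, Summable fun j => ‖A i j‖ ^ q * w i j ^ q) ∧
  (∀ j : G, Summable fun i => ‖A i j‖ ^ q * w i j ^ q) ∧
  BddAbove (Set.range fun i : G => ∑' j : G, ‖A i j‖ ^ q * w i j ^ q) ∧
  BddAbove (Set.range fun j : G => ∑' i : G, ‖A i j‖ ^ q * w i j ^ q)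

section aux
variable {ι : Type*} {q : ℝ}

lemma real_rpow_add_le {a b : ℝ} (ha : 0 ≤ a) (hb : 0 ≤ b) (hq0 : 0 ≤ q) (hq1 : q ≤ 1) :
    (a + b) ^ q ≤ a ^ q + b ^ q := by
  have h := NNReal.rpow_add_le_add_rpow a.toNNReal b.toNNReal hq0 hq1
  have h2 := NNReal.coe_le_coe.mpr h
  push_cast at h2
  rwa [Real.coe_toNNReal a ha, Real.coe_toNNReal b hb] at h2

lemma finset_rpow_sum_le (s : Finset ι) (f : ι → ℝ) (hf : ∀ i, 0 ≤ f i)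
    (hq0 : 0 < q) (hq1 : q ≤ 1) :
    (∑ i ∈ s, f i) ^ q ≤ ∑ i ∈ s, f i ^ q := by
  classical
  induction s using Finset.induction_on with
  | empty => simp [Real.zero_rpow hq0.ne']
  | insert _ _ hx ih =>
    rename_i a s
    rw [Finset.sum_insert hx, Finset.sum_insert hx]
    calc (f a + ∑ i ∈ s, f i) ^ q ≤ f a ^ q + (∑ i ∈ s, f i) ^ q :=
          real_rpow_add_le (hf a) (Finset.sum_nonneg fun i _ => hf i) hq0.le hq1
      _ ≤ f a ^ q + ∑ i ∈ s, f i ^ q := by linarith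

lemma tsum_rpow_le (f : ι → ℝ) (hf : ∀ i, 0 ≤ f i) (hs : Summable f)
    (hsq : Summable fun i => f i ^ q) (hq0 : 0 < q) (hq1 : q ≤ 1) :
    (∑' i, f i) ^ q ≤ ∑' i, f i ^ q := by
  have hS : 0 ≤ ∑' i, f i ^ q := tsum_nonneg fun i => Real.rpow_nonneg (hf i) q
  have h1 : ∑' i, f i ≤ (∑' i, f i ^ q) ^ q⁻¹ := by
    apply Summable.tsum_le_of_sum_le hs
    intro s
    have h2 : (∑ i ∈ s, f i) ^ q ≤ ∑' i, f i ^ q :=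
      le_trans (finset_rpow_sum_le s f hf hq0 hq1)
        (Summable.sum_le_tsum s (fun i _ => Real.rpow_nonneg (hf i) q) hsq)
    calc ∑ i ∈ s, f i = ((∑ i ∈ s, f i) ^ q) ^ q⁻¹ :=
          (Real.rpow_rpow_inv (Finset.sum_nonneg fun i _ => hf i) hq0.ne').symm
      _ ≤ (∑' i, f i ^ q) ^ q⁻¹ :=
          Real.rpow_le_rpow (Real.rpow_nonneg (Finset.sum_nonneg fun i _ => hf i) q) h2
            (by positivity)
  calc (∑' i, f i) ^ q ≤ ((∑' i, f i ^ q) ^ q⁻¹) ^ q :=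
        Real.rpow_le_rpow (tsum_nonneg hf) h1 hq0.le
    _ = ∑' i, f i ^ q := Real.rpow_inv_rpow hS hq0.ne'

lemma summable_of_summable_rpow (f : ι → ℝ) (hf : ∀ i, 0 ≤ f i)
    (h : Summable fun i => f i ^ q) (hq0 : 0 < q) (hq1 : q ≤ 1) : Summable f := by
  have hfin : {i | 1 ≤ f i ^ q}.Finite := by
    have h2 : ∀ᶠ i in Filter.cofinite, f i ^ q < 1 :=
      h.tendsto_cofinite_zero.eventually (gt_mem_nhds one_pos)
    rw [Filter.eventually_cofinite] at h2
    simpa [not_lt] using h2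
  have hle : ∀ i, f i ≤ f i ^ q + Set.indicator {i | 1 ≤ f i ^ q} f i := by
    intro i
    by_cases hi : 1 ≤ f i ^ q
    · have hind : Set.indicator {i | 1 ≤ f i ^ q} f i = f i := Set.indicator_of_mem (show i ∈ {j | 1 ≤ f j ^ q} from hi) f
      rw [hind]
      have : 0 ≤ f i ^ q := Real.rpow_nonneg (hf i) q
      linarith
    · have hmem : Set.indicator {i | 1 ≤ f i ^ q} f i = 0 := Set.indicator_of_notMem (show i ∉ {j | 1 ≤ f j ^ q} from hi) f
      rw [hmem, add_zero]
      push_neg at hi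
      rcases eq_or_lt_of_le (hf i) with h0 | h0
      · rw [← h0]; simp [Real.zero_rpow hq0.ne']
      · have hle1 : f i ≤ 1 := by
          by_contra hgt
          push_neg at hgt
          exact absurd (Real.one_le_rpow hgt.le hq0.le) (not_le.mpr hi)
        calc f i = f i ^ (1:ℝ) := (Real.rpow_one _).symm
          _ ≤ f i ^ q := Real.rpow_le_rpow_of_exponent_ge h0 hle1 hq1
  have hgsum : Summable fun i => f i ^ q + Set.indicator {i | 1 ≤ f i ^ q} f i := by
    refine h.add (summable_of_finite_support (hfin.subset ?_))
    exact Function.support_subset_iff'.mpr fun i hi => Set.indicator_of_notMem hi f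
  exact Summable.of_nonneg_of_le hf hle hgsum

end aux

section rowbound

variable {G : Type*} {q : ℝ}

lemma Sqw_row_bound (hq0 : 0 < q) (hq1 : q ≤ 1) (w : G → G → ℝ)
    (hw1 : ∀ i j, 1 ≤ w i j) (hwsub : ∀ i j k, w i j ≤ w i k * w k j)
    (A B : G → G → ℂ) (hA : FiniteSqw q w A) (hB : FiniteSqw q w B) (i : G) :
    ∑' j, ‖∑' k, A i k * B k j‖ ^ q * w i j ^ q ≤
      SqwPow q w A * SqwPow q w B := by
  classical
  set a : G → G → ℝ := fun i k => ‖A i k‖ ^ q * w i k ^ q with ha_def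
  set b : G → G → ℝ := fun k j => ‖B k j‖ ^ q * w k j ^ q with hb_def
  have hw0 : ∀ i j, 0 ≤ w i j := fun i j => le_trans zero_le_one (hw1 i j)
  have hwq1 : ∀ i j, 1 ≤ w i j ^ q := fun i j => Real.one_le_rpow (hw1 i j) hq0.le
  have hwq0 : ∀ i j, 0 ≤ w i j ^ q := fun i j => Real.rpow_nonneg (hw0 i j) q
  have ha0 : ∀ i k, 0 ≤ a i k := fun i k =>
    mul_nonneg (Real.rpow_nonneg (norm_nonneg _) q) (hwq0 i k)
  have hb0 : ∀ k j, 0 ≤ b k j := fun k j =>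
    mul_nonneg (Real.rpow_nonneg (norm_nonneg _) q) (hwq0 k j)
  have hPB0 : 0 ≤ SqwPow q w B :=
    le_trans (Real.iSup_nonneg fun k => tsum_nonneg fun j => hb0 k j) (le_max_left _ _)
  have hPA0 : 0 ≤ SqwPow q w A :=
    le_trans (Real.iSup_nonneg fun k => tsum_nonneg fun j => ha0 k j) (le_max_left _ _)
  have hrowB : ∀ k, ∑' j, b k j ≤ SqwPow q w B := fun k =>
    le_trans (le_ciSup hB.2.2.1 k) (le_max_left _ _)
  have hrowA : ∑' k, a i k ≤ SqwPow q w A :=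
    le_trans (le_ciSup hA.2.2.1 i) (le_max_left _ _)
  -- column sums of B
  set C : G → ℝ := fun j => ∑' k, b k j with hC_def
  have hC0 : ∀ j, 0 ≤ C j := fun j => tsum_nonneg fun k => hb0 k j
  have hbC : ∀ k j, b k j ≤ C j := fun k j =>
    Summable.le_tsum (hB.2.1 j) k fun k' _ => hb0 k' j
  -- summability of row of A
  have hAq : Summable fun k => ‖A i k‖ ^ q := by
    refine Summable.of_nonneg_of_le
      (fun k => Real.rpow_nonneg (norm_nonneg _) q) (fun k => ?_) (hA.1 i)
    exact le_mul_of_one_le_right (Real.rpow_nonneg (norm_nonneg _) q) (hwq1 i k)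
  have hAs : Summable fun k => ‖A i k‖ :=
    summable_of_summable_rpow _ (fun k => norm_nonneg _) hAq hq0 hq1
  -- summability of a·b for each column j
  have hab_sum : ∀ j, Summable fun k => a i k * b k j := by
    intro j
    refine Summable.of_nonneg_of_le (fun k => mul_nonneg (ha0 i k) (hb0 k j))
      (fun k => mul_le_mul_of_nonneg_left (hbC k j) (ha0 i k)) ((hA.1 i).mul_right (C j))
  -- pointwise key inequality
  have hkey : ∀ j, ‖∑' k, A i k * B k j‖ ^ q * w i j ^ q ≤
      ∑' k, a i k * b k j := by
    intro j
    have hβq : ∀ k, ‖B k j‖ ^ q ≤ C j := fun k =>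
      le_trans (le_mul_of_one_le_right (Real.rpow_nonneg (norm_nonneg _) q)
        (hwq1 k j)) (hbC k j)
    have hβ : ∀ k, ‖B k j‖ ≤ C j ^ q⁻¹ := by
      intro k
      calc ‖B k j‖ = (‖B k j‖ ^ q) ^ q⁻¹ :=
            (Real.rpow_rpow_inv (norm_nonneg _) hq0.ne').symm
        _ ≤ C j ^ q⁻¹ := Real.rpow_le_rpow (Real.rpow_nonneg (norm_nonneg _) q)
            (hβq k) (by positivity)
    have hαβ : Summable fun k => ‖A i k‖ * ‖B k j‖ := by
      refine Summable.of_nonneg_of_le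
        (fun k => mul_nonneg (norm_nonneg _) (norm_nonneg _))
        (fun k => mul_le_mul_of_nonneg_left (hβ k) (norm_nonneg _))
        (hAs.mul_right _)
    have hprod : Summable fun k => A i k * B k j := by
      apply Summable.of_norm
      simpa [map_mul] using hαβ
    have h1 : ‖∑' k, A i k * B k j‖ ≤
        ∑' k, ‖A i k‖ * ‖B k j‖ := by
      have := norm_tsum_le_tsum_norm (f := fun k => A i k * B k j)
        (by simpa [map_mul] using hαβ)
      simpa [map_mul] using this
    have hαβq : Summable fun k => (‖A i k‖ * ‖B k j‖) ^ q := by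
      refine Summable.of_nonneg_of_le
        (fun k => Real.rpow_nonneg (mul_nonneg (norm_nonneg _) (norm_nonneg _)) q)
        (fun k => ?_) (hAq.mul_right (C j))
      rw [Real.mul_rpow (norm_nonneg _) (norm_nonneg _)]
      exact mul_le_mul_of_nonneg_left (hβq k) (Real.rpow_nonneg (norm_nonneg _) q)
    have h2 : ‖∑' k, A i k * B k j‖ ^ q ≤
        ∑' k, (‖A i k‖ * ‖B k j‖) ^ q :=
      le_trans (Real.rpow_le_rpow (norm_nonneg _) h1 hq0.le)
        (tsum_rpow_le _ (fun k => mul_nonneg (norm_nonneg _) (norm_nonneg _))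
          hαβ hαβq hq0 hq1)
    calc ‖∑' k, A i k * B k j‖ ^ q * w i j ^ q
        ≤ (∑' k, (‖A i k‖ * ‖B k j‖) ^ q) * w i j ^ q :=
          mul_le_mul_of_nonneg_right h2 (hwq0 i j)
      _ = ∑' k, (‖A i k‖ * ‖B k j‖) ^ q * w i j ^ q :=
          (tsum_mul_right).symm
      _ ≤ ∑' k, a i k * b k j := by
          refine Summable.tsum_le_tsum (fun k => ?_) (hαβq.mul_right _) (hab_sum j)
          have hwle : w i j ^ q ≤ w i k ^ q * w k j ^ q := by
            rw [← Real.mul_rpow (hw0 i k) (hw0 k j)]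
            exact Real.rpow_le_rpow (hw0 i j) (hwsub i j k) hq0.le
          calc (‖A i k‖ * ‖B k j‖) ^ q * w i j ^ q
              = ‖A i k‖ ^ q * ‖B k j‖ ^ q * w i j ^ q := by
                rw [Real.mul_rpow (norm_nonneg _) (norm_nonneg _)]
            _ ≤ ‖A i k‖ ^ q * ‖B k j‖ ^ q * (w i k ^ q * w k j ^ q) := by
                refine mul_le_mul_of_nonneg_left hwle ?_
                exact mul_nonneg (Real.rpow_nonneg (norm_nonneg _) q)
                  (Real.rpow_nonneg (norm_nonneg _) q)
            _ = a i k * b k j := by simp only [ha_def, hb_def]; ring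
  -- joint summability
  have hF : Summable fun p : G × G => a i p.1 * b p.1 p.2 := by
    rw [summable_prod_of_nonneg (fun p => mul_nonneg (ha0 i p.1) (hb0 p.1 p.2))]
    refine ⟨fun k => (hB.1 k).mul_left (a i k), ?_⟩
    refine Summable.of_nonneg_of_le
      (fun k => tsum_nonneg fun j => mul_nonneg (ha0 i k) (hb0 k j))
      (fun k => ?_) ((hA.1 i).mul_right (SqwPow q w B))
    have hre : (fun y : G => a i (k, y).1 * b (k, y).1 (k, y).2) = fun y => a i k * b k y := rfl
    rw [hre, tsum_mul_left]
    exact mul_le_mul_of_nonneg_left (hrowB k) (ha0 i k)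
  have hd_sum : Summable fun j => ∑' k, a i k * b k j := by
    have := hF.prod_symm.prod
    simpa using this
  have hc_sum : Summable fun j => ‖∑' k, A i k * B k j‖ ^ q * w i j ^ q :=
    Summable.of_nonneg_of_le
      (fun j => mul_nonneg (Real.rpow_nonneg (norm_nonneg _) q) (hwq0 i j))
      hkey hd_sum
  calc ∑' j, ‖∑' k, A i k * B k j‖ ^ q * w i j ^ q
      ≤ ∑' j, ∑' k, a i k * b k j := Summable.tsum_le_tsum hkey hc_sum hd_sum
    _ = ∑' k, ∑' j, a i k * b k j := Summable.tsum_comm (f := fun k j => a i k * b k j) hF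
    _ = ∑' k, a i k * ∑' j, b k j := by simp only [tsum_mul_left]
    _ ≤ ∑' k, a i k * SqwPow q w B := by
        refine Summable.tsum_le_tsum (fun k => mul_le_mul_of_nonneg_left (hrowB k) (ha0 i k)) ?_
          ((hA.1 i).mul_right _)
        refine Summable.of_nonneg_of_le
          (fun k => mul_nonneg (ha0 i k) (tsum_nonneg fun j => hb0 k j))
          (fun k => mul_le_mul_of_nonneg_left (hrowB k) (ha0 i k))
          ((hA.1 i).mul_right _)
    _ = (∑' k, a i k) * SqwPow q w B := tsum_mul_right
    _ ≤ SqwPow q w A * SqwPow q w B := mul_le_mul_of_nonneg_right hrowA hPB0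

end rowbound

section transpose

variable {G : Type*} {q : ℝ}

lemma FiniteSqw_transpose (w : G → G → ℝ) (hwsym : ∀ i j, w i j = w j i)
    (A : G → G → ℂ) (hA : FiniteSqw q w A) : FiniteSqw q w (fun i j => A j i) := by
  obtain ⟨h1, h2, h3, h4⟩ := hA
  refine ⟨fun i => ?_, fun j => ?_, ?_, ?_⟩
  · exact (h2 i).congr fun j => by rw [hwsym j i]
  · exact (h1 j).congr fun i => by rw [hwsym j i]
  · convert h4 using 3 with i
    exact tsum_congr fun j => by rw [hwsym i j]
  · convert h3 using 3 with j
    exact tsum_congr fun i => by rw [hwsym i j]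

lemma SqwPow_transpose (w : G → G → ℝ) (hwsym : ∀ i j, w i j = w j i)
    (A : G → G → ℂ) : SqwPow q w (fun i j => A j i) = SqwPow q w A := by
  unfold SqwPow
  rw [max_comm]
  congr 1
  · exact iSup_congr fun j => tsum_congr fun i => by rw [hwsym i j]
  · exact iSup_congr fun i => tsum_congr fun j => by rw [hwsym i j]

end transpose

/-- Submultiplicativity of the S_{q,w} quasi-norm for a submultiplicative weight. -/
theorem SqwNorm_submultiplicative {G : Type*} [Countable G] (q : ℝ)
    (hq0 : 0 < q) (hq1 : q ≤ 1) (w : G → G → ℝ)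
    (hw1 : ∀ i j, 1 ≤ w i j) (hwsym : ∀ i j, w i j = w j i)
    (hwsub : ∀ i j k, w i j ≤ w i k * w k j)
    (A B : G → G → ℂ) (hA : FiniteSqw q w A) (hB : FiniteSqw q w B) :
    SqwNorm q w (fun i j => ∑' k : G, A i k * B k j) ≤
      SqwNorm q w A * SqwNorm q w B := by
  have hw0 : ∀ i j, 0 ≤ w i j := fun i j => le_trans zero_le_one (hw1 i j)
  have hwq0 : ∀ i j, 0 ≤ w i j ^ q := fun i j => Real.rpow_nonneg (hw0 i j) q
  have hterm0 : ∀ (M : G → G → ℂ) (i j : G), 0 ≤ ‖M i j‖ ^ q * w i j ^ q :=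
    fun M i j => mul_nonneg (Real.rpow_nonneg (norm_nonneg _) q) (hwq0 i j)
  have hSqw0 : ∀ M : G → G → ℂ, 0 ≤ SqwPow q w M := by
    intro M
    refine le_trans ?_ (le_max_left _ _)
    exact Real.iSup_nonneg fun i => tsum_nonneg fun j => hterm0 M i j
  have hpow : SqwPow q w (fun i j => ∑' k : G, A i k * B k j) ≤
      SqwPow q w A * SqwPow q w B := by
    apply max_le
    · exact Real.iSup_le (fun i => Sqw_row_bound hq0 hq1 w hw1 hwsub A B hA hB i)
        (mul_nonneg (hSqw0 A) (hSqw0 B))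
    · refine Real.iSup_le (fun j => ?_) (mul_nonneg (hSqw0 A) (hSqw0 B))
      have h := Sqw_row_bound hq0 hq1 w hw1 hwsub (fun i j => B j i) (fun i j => A j i)
        (FiniteSqw_transpose w hwsym B hB) (FiniteSqw_transpose w hwsym A hA) j
      calc ∑' i, ‖(fun i j => ∑' k : G, A i k * B k j) i j‖ ^ q * w i j ^ q
          = ∑' i, ‖∑' k, (fun i j => B j i) j k * (fun i j => A j i) k i‖ ^ q
              * w j i ^ q := by
            refine tsum_congr fun i => ?_
            show ‖∑' k : G, A i k * B k j‖ ^ q * w i j ^ q =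
              ‖∑' k : G, B k j * A i k‖ ^ q * w j i ^ q
            rw [hwsym i j, show (∑' k : G, A i k * B k j) = ∑' k : G, B k j * A i k from
              tsum_congr fun k => mul_comm _ _]
        _ ≤ SqwPow q w (fun i j => B j i) * SqwPow q w (fun i j => A j i) := h
        _ = SqwPow q w A * SqwPow q w B := by
            rw [SqwPow_transpose w hwsym A, SqwPow_transpose w hwsym B, mul_comm]
  show SqwPow q w (fun i j => ∑' k : G, A i k * B k j) ^ (1 / q) ≤
      SqwPow q w A ^ (1 / q) * SqwPow q w B ^ (1 / q)
  calc SqwPow q w (fun i j => ∑' k : G, A i k * B k j) ^ (1 / q)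
      ≤ (SqwPow q w A * SqwPow q w B) ^ (1 / q) :=
        Real.rpow_le_rpow (hSqw0 _) hpow (by positivity)
    _ = SqwPow q w A ^ (1 / q) * SqwPow q w B ^ (1 / q) :=
        Real.mul_rpow (hSqw0 A) (hSqw0 B)
end

section
/- Lyapunov equation via integral: if A ∈ B(H) satisfies ‖e^{tA}‖ ≤ E e^{-αt} for all t ≥ 0 (E, α > 0) and Q ∈ B(H) is self-adjoint and positive, then P = ∫_0^∞ e^{tA*} Q e^{tA} dt converges in B(H), is self-adjoint positive, and satisfies A*P + PA + Q = 0. -/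
open MeasureTheory ContinuousLinearMap Filter Set
open scoped ComplexInnerProductSpace Topology

set_option maxHeartbeats 1000000
set_option synthInstance.maxHeartbeats 400000

/-- Lyapunov equation via the integral P = ∫₀^∞ e^{tA*} Q e^{tA} dt: for an
exponentially stable A and positive self-adjoint Q, the integral converges,
is positive self-adjoint, and satisfies A*P + PA + Q = 0. -/
theorem lyapunov_integral {H : Type*} [NormedAddCommGroup H]
    [InnerProductSpace ℂ H] [CompleteSpace H]
    (A Q : H →L[ℂ] H) (E α : ℝ) (hE : 0 < E) (hα : 0 < α)
    (hstab : ∀ t : ℝ, 0 ≤ t → ‖NormedSpace.exp (t • A)‖ ≤ E * Real.exp (-α * t))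
    (hQ : Q.IsPositive) :
    IntegrableOn
      (fun t : ℝ => adjoint (NormedSpace.exp (t • A)) * Q * NormedSpace.exp (t • A))
      (Set.Ioi 0) ∧
    (∫ t in Set.Ioi (0 : ℝ),
        adjoint (NormedSpace.exp (t • A)) * Q * NormedSpace.exp (t • A)).IsPositive ∧
    adjoint A * (∫ t in Set.Ioi (0 : ℝ),
        adjoint (NormedSpace.exp (t • A)) * Q * NormedSpace.exp (t • A)) +
      (∫ t in Set.Ioi (0 : ℝ),
        adjoint (NormedSpace.exp (t • A)) * Q * NormedSpace.exp (t • A)) * A +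
      Q = 0 := by
  set g : ℝ → (H →L[ℂ] H) := fun t => NormedSpace.exp (t • A) with hgdef
  set f : ℝ → (H →L[ℂ] H) := fun t => adjoint (g t) * Q * g t with hfdef
  have hgcont : Continuous g :=
    continuous_iff_continuousAt.2 fun t => (hasDerivAt_exp_smul_const (𝕂 := ℝ) A t).continuousAt
  have hfstar : ∀ t, f t = star (g t) * Q * g t := fun t => by
    rw [hfdef, star_eq_adjoint]
  have hfcont : Continuous f := by
    have : Continuous fun t => star (g t) * Q * g t :=
      ((hgcont.star.mul continuous_const).mul hgcont)
    simpa [← hfstar] using this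
  have hQn : (0:ℝ) ≤ ‖Q‖ := norm_nonneg Q
  -- norm bound
  have hfbound : ∀ t : ℝ, 0 ≤ t → ‖f t‖ ≤ E * E * ‖Q‖ * Real.exp (-(2 * α) * t) := by
    intro t ht
    have h1 : ‖adjoint (g t)‖ = ‖g t‖ := by
      rw [← star_eq_adjoint]; exact norm_star _
    have hg := hstab t ht
    calc ‖f t‖ ≤ ‖adjoint (g t) * Q‖ * ‖g t‖ := norm_mul_le _ _
      _ ≤ ‖adjoint (g t)‖ * ‖Q‖ * ‖g t‖ := by gcongr; exact norm_mul_le _ _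
      _ = ‖g t‖ * ‖Q‖ * ‖g t‖ := by rw [h1]
      _ ≤ (E * Real.exp (-α * t)) * ‖Q‖ * (E * Real.exp (-α * t)) := by
          gcongr
      _ = E * E * ‖Q‖ * Real.exp (-(2 * α) * t) := by
          rw [show -(2 * α) * t = -α * t + -α * t by ring, Real.exp_add]; ring
  -- integrability of f
  haveI : SecondCountableTopologyEither ℝ (H →L[ℂ] H) :=
    ⟨Or.inl inferInstance⟩
  have hmaj : IntegrableOn (fun t : ℝ => E * E * ‖Q‖ * Real.exp (-(2 * α) * t)) (Ioi 0) :=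
    (exp_neg_integrableOn_Ioi 0 (by positivity)).const_mul _
  have hint : IntegrableOn f (Ioi 0) := by
    refine hmaj.mono' hfcont.aestronglyMeasurable.restrict ?_
    filter_upwards [ae_restrict_mem measurableSet_Ioi] with t ht
    simpa using hfbound t (le_of_lt ht)
  have hfsa : ∀ t, star (f t) = f t := fun t => by
    simp [hfstar, star_mul, mul_assoc, hQ.isSelfAdjoint.star_eq]
  set P := ∫ t in Ioi (0:ℝ), f t with hPdef
  have hPsa : IsSelfAdjoint P := by
    have h := ((starL' ℝ : (H →L[ℂ] H) ≃L[ℝ] (H →L[ℂ] H)) :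
        (H →L[ℂ] H) →L[ℝ] (H →L[ℂ] H)).integral_comp_comm hint
    simp only [ContinuousLinearEquiv.coe_coe, starL'_apply, hfsa] at h
    exact h.symm
  have hPpos : ∀ x : H, 0 ≤ P.reApplyInnerSelf x := by
    intro x
    have hintx : Integrable (fun t => f t x) ((volume : Measure ℝ).restrict (Ioi 0)) :=
      (ContinuousLinearMap.apply ℂ H x).integrable_comp hint
    have hPx : P x = ∫ t in Ioi (0:ℝ), f t x := integral_apply hint x
    have hinner : (@inner ℂ H _ x (P x)) = ∫ t in Ioi (0:ℝ), (@inner ℂ H _ x (f t x)) := by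
      rw [hPx]; exact (integral_inner (𝕜 := ℂ) hintx x).symm
    have hintinner : Integrable (fun t => (@inner ℂ H _ x (f t x)))
        ((volume : Measure ℝ).restrict (Ioi 0)) :=
      (innerSL ℂ x).integrable_comp hintx
    have hptnn : ∀ t : ℝ, 0 ≤ RCLike.re (@inner ℂ H _ x (f t x)) := by
      intro t
      have h2 : (@inner ℂ H _ (f t x) x) = (@inner ℂ H _ (Q (g t x)) (g t x)) := by
        have : f t x = adjoint (g t) (Q (g t x)) := rfl
        rw [this, adjoint_inner_left]
      rw [inner_re_symm, h2]
      exact hQ.re_inner_nonneg_left _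
    rw [reApplyInnerSelf_apply, inner_re_symm, hinner, ← integral_re hintinner]
    exact setIntegral_nonneg measurableSet_Ioi fun t _ => hptnn t
  refine ⟨hint, ⟨ContinuousLinearMap.isSelfAdjoint_iff_isSymmetric.mp hPsa, hPpos⟩, ?_⟩
  -- derivatives
  have hgd : ∀ t : ℝ, HasDerivAt g (A * g t) t := fun t => by
    have h := hasDerivAt_exp_smul_const' (𝕂 := ℝ) A t
    simpa [hgdef] using h
  have hgd' : ∀ t : ℝ, HasDerivAt g (g t * A) t := fun t => by
    have h := hasDerivAt_exp_smul_const (𝕂 := ℝ) A t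
    simpa [hgdef] using h
  have hcomm : ∀ t : ℝ, Commute A (g t) := fun t =>
    ((Commute.refl A).smul_right t).exp_right
  have hfd : ∀ t : ℝ, HasDerivAt f (adjoint A * f t + f t * A) t := by
    intro t
    have hu : HasDerivAt (fun s => star (g s)) (star (A * g t)) t := (hgd t).star
    have huQ : HasDerivAt (fun s => star (g s) * Q) (star (A * g t) * Q) t := hu.mul_const Q
    have h : HasDerivAt (fun s => star (g s) * Q * g s) (star (A * g t) * Q * g t + star (g t) * Q * (g t * A)) t := huQ.mul (hgd' t)
    have hfun : (fun s => star (g s) * Q * g s) = f := funext fun s => (hfstar s).symm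
    rw [hfun] at h
    have e1 : star (A * g t) * Q * g t = adjoint A * f t := by
      rw [(hcomm t).eq, star_mul]
      simp [star_eq_adjoint, hfdef, mul_assoc]
    have e2 : star (g t) * Q * (g t * A) = f t * A := by
      rw [hfstar]; simp [mul_assoc]
    rwa [e1, e2] at h
  -- limit at infinity
  have hftop : Tendsto f atTop (𝓝 0) := by
    have hlim : Tendsto (fun t : ℝ => E * E * ‖Q‖ * Real.exp (-(2 * α) * t)) atTop (𝓝 0) := by
      have h1 : Tendsto (fun t : ℝ => 2 * α * t) atTop atTop :=
        Tendsto.const_mul_atTop (by positivity) tendsto_id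
      have h2 : Tendsto (fun t : ℝ => Real.exp (-(2 * α) * t)) atTop (𝓝 0) := by
        have := Real.tendsto_exp_neg_atTop_nhds_zero.comp h1
        simpa [Function.comp_def, neg_mul] using this
      simpa using h2.const_mul (E * E * ‖Q‖)
    refine squeeze_zero_norm' ?_ hlim
    filter_upwards [eventually_ge_atTop (0:ℝ)] with t ht using hfbound t ht
  -- integrability of the derivative
  have hL : IntegrableOn (fun t => adjoint A * f t) (Ioi 0) :=
    (ContinuousLinearMap.mul ℂ (H →L[ℂ] H) (adjoint A)).integrable_comp hint
  have hR : IntegrableOn (fun t => f t * A) (Ioi 0) :=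
    ((ContinuousLinearMap.mul ℂ (H →L[ℂ] H)).flip A).integrable_comp hint
  have key : (∫ t in Ioi (0:ℝ), (adjoint A * f t + f t * A)) = 0 - f 0 :=
    integral_Ioi_of_hasDerivAt_of_tendsto hfcont.continuousWithinAt
      (fun x _ => hfd x) (hL.add hR) hftop
  have hf0 : f 0 = Q := by
    rw [hfdef]
    simp only [hgdef]
    rw [zero_smul, NormedSpace.exp_zero, ← star_eq_adjoint]
    simp
  have hsplit : (∫ t in Ioi (0:ℝ), (adjoint A * f t + f t * A)) = adjoint A * P + P * A := by
    rw [integral_add hL hR]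
    congr 1
    · exact (ContinuousLinearMap.mul ℂ (H →L[ℂ] H) (adjoint A)).integral_comp_comm hint
    · exact ((ContinuousLinearMap.mul ℂ (H →L[ℂ] H)).flip A).integral_comp_comm hint
  have hfin : adjoint A * P + P * A = -Q := by
    rw [← hsplit, key, hf0, zero_sub]
  rw [hfin]
  simp
end
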